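/- Let T be a Turing machine such that for every N ∈ ℕ the machine can make a right-cycle of width greater than N at cell 0 (i.e., for each j there is a configuration on which the head starts at 0, reaches cell n_j > j, and returns to 0). Then T_H has a configuration containing the head which is not an equicontinuity point. -/

import Mathlib

/-- A Turing machine with tape alphabet `A`, state set `Q`, and rule
`δ : A × Q → A × Q × {-1,1}` (the direction is encoded by a `Bool`). -/
structure TuringMachine (A Q : Type*) where
  δ : A → Q → A × Q × Bool

namespace TuringMachine

variable {A Q : Type*}

/-- Direction of a move: `true ↦ +1`, `false ↦ -1`. -/
def dir (b : Bool) : ℤ := if b then 1 else -1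

/-- A configuration: tape contents, head state, head position. -/
abbrev Config (A Q : Type*) := (ℤ → A) × Q × ℤ

/-- One step of the machine on `X = A^ℤ × Q × ℤ`. -/
def step (M : TuringMachine A Q) (c : Config A Q) : Config A Q :=
  let r := M.δ (c.1 c.2.2) c.2.1
  (Function.update c.1 c.2.2 r.1, r.2.1, c.2.2 + dir r.2.2)

/-- Head position after `t` steps. -/
def pos (M : TuringMachine A Q) (t : ℕ) (c : Config A Q) : ℤ :=
  ((M.step)^[t] c).2.2

/-- `c` is preperiodic for the machine. -/
def Preperiodic (M : TuringMachine A Q) (c : Config A Q) : Prop :=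
  ∃ m p : ℕ, 0 < p ∧ (M.step)^[m + p] c = (M.step)^[m] c

end TuringMachine

namespace TuringMachine

variable {A Q : Type*}

/-- Alphabet of the moving-head system: a tape letter, or a tape letter marked
with the head together with its state. -/
abbrev Cell (A Q : Type*) := A ⊕ (A × Q)

/-- A cell carries the head. -/
def isHead {A Q : Type*} (b : Cell A Q) : Prop := ∃ p : A × Q, b = Sum.inr p

/-- Membership in the moving-head phase space X_H: at most one marked cell. -/
def XHmem (x : ℤ → Cell A Q) : Prop :=
  Set.Subsingleton {i : ℤ | isHead (x i)}

/-- One step of the moving-head system T_H on (A ⊔ (A × Q))^ℤ: if there is a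
head, apply the rule of the machine at the marked cell (write, change state, and
move the mark by ±1); otherwise do nothing. -/
noncomputable def hstep (M : TuringMachine A Q) (x : ℤ → Cell A Q) :
    ℤ → Cell A Q := by
  classical
  exact if h : ∃ i : ℤ, ∃ b : A, ∃ q : Q, x i = Sum.inr (b, q) then
    let i := h.choose
    let b := h.choose_spec.choose
    let q := h.choose_spec.choose_spec.choose
    let r := M.δ b q
    let y := Function.update x i (Sum.inl r.1)
    let j := i + dir r.2.2
    Function.update y j
      (match y j with
        | Sum.inl c => Sum.inr (c, r.2.1)
        | Sum.inr (c, _) => Sum.inr (c, r.2.1))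
  else x

/-- The column observed at cell 0, defining the subshift S_H. -/
noncomputable def tauH (M : TuringMachine A Q) (x : ℤ → Cell A Q) (t : ℕ) :
    Cell A Q :=
  ((M.hstep)^[t] x) 0

/-- The language of finite factors of the column subshift S_H. -/
noncomputable def langSH (M : TuringMachine A Q) : Language (Cell A Q) :=
  {w : List (Cell A Q) | ∃ x : ℤ → Cell A Q, XHmem x ∧ ∃ m : ℕ,
    ∀ j : ℕ, ∀ hj : j < w.length, w.get ⟨j, hj⟩ = M.tauH x (m + j)}

end TuringMachine

namespace TuringMachine
variable {A Q : Type*}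

-- auxiliary

lemma dir_abs (b : Bool) : |dir b| = 1 := by cases b <;> simp [dir]

lemma dir_ne (b : Bool) : dir b ≠ 0 := by cases b <;> simp [dir]

def base : Cell A Q → A := fun z => match z with | .inl a => a | .inr (a, _) => a

def iota (c : Config A Q) : ℤ → Cell A Q :=
  fun i => if i = c.2.2 then .inr (c.1 i, c.2.1) else .inl (c.1 i)

lemma not_isHead_inl (a : A) : ¬ isHead (Sum.inl a : Cell A Q) := by
  rintro ⟨p, h⟩; exact absurd h (by simp)

lemma XHmem_iota (c : Config A Q) : XHmem (iota c) := by
  intro i hi j hj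
  simp only [Set.mem_setOf_eq, iota] at hi hj
  by_contra
  rcases em (i = c.2.2) with h | h
  · rcases em (j = c.2.2) with h2 | h2
    · omega
    · rw [if_neg h2] at hj; exact not_isHead_inl _ hj
  · rw [if_neg h] at hi; exact not_isHead_inl _ hi

lemma hstep_eq (M : TuringMachine A Q) (x : ℤ → Cell A Q) (p : ℤ) (b : A) (q : Q)
    (hx : XHmem x) (hp : x p = Sum.inr (b, q)) :
    M.hstep x = Function.update (Function.update x p (Sum.inl (M.δ b q).1))
      (p + dir (M.δ b q).2.2)
      (Sum.inr (base (x (p + dir (M.δ b q).2.2)), (M.δ b q).2.1)) := by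
  have h : ∃ i : ℤ, ∃ b : A, ∃ q : Q, x i = Sum.inr (b, q) := ⟨p, b, q, hp⟩
  have hi : x h.choose = Sum.inr (h.choose_spec.choose, h.choose_spec.choose_spec.choose) :=
    h.choose_spec.choose_spec.choose_spec
  have hip : p = h.choose := (hx ⟨_, hi⟩ ⟨_, hp⟩).symm
  have hbq : Sum.inr (α := A) (h.choose_spec.choose, h.choose_spec.choose_spec.choose)
      = Sum.inr (b, q) := by rw [← hi, ← hip, hp]
  have hb : b = h.choose_spec.choose := by
    have := Sum.inr.inj hbq; exact (congrArg Prod.fst this).symm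
  have hq : q = h.choose_spec.choose_spec.choose := by
    have := Sum.inr.inj hbq; exact (congrArg Prod.snd this).symm
  rw [hstep, dif_pos h, hip, hb, hq]
  set i := h.choose with hidef
  set b' := h.choose_spec.choose with hbdef
  set q' := h.choose_spec.choose_spec.choose with hqdef
  have hji : i + dir (M.δ b' q').2.2 ≠ i := by
    have := dir_ne (M.δ b' q').2.2; omega
  show Function.update (Function.update x i (Sum.inl (M.δ b' q').1)) (i + dir (M.δ b' q').2.2)
      (match Function.update x i (Sum.inl (M.δ b' q').1) (i + dir (M.δ b' q').2.2) with
        | Sum.inl c => Sum.inr (c, (M.δ b' q').2.1)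
        | Sum.inr (c, _) => Sum.inr (c, (M.δ b' q').2.1)) = _
  rw [Function.update_of_ne hji]
  rcases hxj : x (i + dir (M.δ b' q').2.2) with a | ⟨a, qq⟩ <;> simp [base] <;> rfl



lemma iota_head (c : Config A Q) : iota c c.2.2 = Sum.inr (c.1 c.2.2, c.2.1) := by
  simp [iota]

lemma hstep_iota (M : TuringMachine A Q) (c : Config A Q) :
    M.hstep (iota c) = iota (M.step c) := by
  have hp : iota c c.2.2 = Sum.inr (c.1 c.2.2, c.2.1) := iota_head c
  rw [hstep_eq M (iota c) c.2.2 (c.1 c.2.2) c.2.1 (XHmem_iota c) hp]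
  set r := M.δ (c.1 c.2.2) c.2.1 with hr
  have hji : c.2.2 + dir r.2.2 ≠ c.2.2 := by have := dir_ne r.2.2; omega
  funext i
  have hstepc : M.step c = (Function.update c.1 c.2.2 r.1, r.2.1, c.2.2 + dir r.2.2) := rfl
  rcases em (i = c.2.2 + dir r.2.2) with h | h
  · subst h
    rw [Function.update_self]
    rw [hstepc]
    simp only [iota, if_pos rfl]
    rw [Function.update_of_ne hji]
    rw [if_neg hji, if_pos trivial]
    simp [base]
  · rw [Function.update_of_ne h]
    rcases em (i = c.2.2) with h2 | h2
    · subst h2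
      rw [Function.update_self, hstepc]
      simp only [iota]
      rw [if_neg (by omega : ¬ (c.2.2 : ℤ) = c.2.2 + dir r.2.2), Function.update_self]
    · rw [Function.update_of_ne h2, hstepc]
      simp [iota, if_neg h2, if_neg h, Function.update_of_ne h2]

lemma hstep_iter_iota (M : TuringMachine A Q) (c : Config A Q) (t : ℕ) :
    (M.hstep)^[t] (iota c) = iota ((M.step)^[t] c) := by
  induction t with
  | zero => rfl
  | succ n ih => rw [Function.iterate_succ_apply', ih, hstep_iota, Function.iterate_succ_apply']

lemma pos_zero (M : TuringMachine A Q) (c : Config A Q) : M.pos 0 c = c.2.2 := rfl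

lemma pos_succ_abs (M : TuringMachine A Q) (c : Config A Q) (t : ℕ) :
    |M.pos (t + 1) c - M.pos t c| ≤ 1 := by
  have : M.pos (t+1) c = ((M.step) ((M.step)^[t] c)).2.2 := by
    rw [pos, Function.iterate_succ_apply']
  rw [this, pos]
  set y := (M.step)^[t] c
  have : (M.step y).2.2 = y.2.2 + dir (M.δ (y.1 y.2.2) y.2.1).2.2 := rfl
  rw [this]
  simpa using le_of_eq (dir_abs (M.δ (y.1 y.2.2) y.2.1).2.2)

lemma pos_abs_le (M : TuringMachine A Q) (c : Config A Q) (h : c.2.2 = 0) (t : ℕ) :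
    |M.pos t c| ≤ t := by
  induction t with
  | zero => simp [pos_zero, h]
  | succ n ih =>
    have h2 := pos_succ_abs M c n
    have h3 := abs_sub_abs_le_abs_sub (M.pos (n+1) c) (M.pos n c)
    push_cast
    omega



lemma chain_aux (f : ℕ → ℤ) (hf : ∀ t : ℕ, |f (t + 1) - f t| ≤ 1) (b : ℕ)
    (hne : ∀ s : ℕ, 1 ≤ s → s ≤ b → f s ≠ 0) (h1 : 0 < f 1) :
    ∀ s : ℕ, 1 ≤ s → s ≤ b → 0 < f s := by
  intro s
  induction s with
  | zero => omega
  | succ n ih =>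
    intro _ hsb
    rcases Nat.eq_zero_or_pos n with h | h
    · subst h; exact h1
    · have hn := ih (by omega) (by omega)
      have h2 := abs_le.mp (hf n)
      have h3 := hne (n + 1) (by omega) hsb
      omega

lemma chain_pos (f : ℕ → ℤ) (hf : ∀ t : ℕ, |f (t + 1) - f t| ≤ 1) (b : ℕ)
    (h0 : f 0 = 0) (hne : ∀ s : ℕ, 1 ≤ s → s ≤ b → f s ≠ 0) (hb : 0 < f b) :
    ∀ s : ℕ, 1 ≤ s → s ≤ b → 0 < f s := by
  have hb1 : 1 ≤ b := by
    by_contra h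
    have : b = 0 := by omega
    rw [this, h0] at hb; omega
  have h1 : 0 < f 1 := by
    have h2 := abs_le.mp (hf 0)
    have h3 := hne 1 le_rfl hb1
    rcases lt_trichotomy (f 1) 0 with h | h | h
    · exfalso
      have hneg : ∀ s : ℕ, 1 ≤ s → s ≤ b → 0 < - f s := by
        apply chain_aux (fun s => - f s)
        · intro t
          have := hf t
          have : |(- f (t+1)) - (- f t)| = |f (t+1) - f t| := by
            rw [← abs_neg]; ring_nf
          omega
        · intro s hs1 hs2
          have := hne s hs1 hs2; omega
        · omega
      have := hneg b hb1 le_rfl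
      omega
    · exact absurd h h3
    · exact h
  exact chain_aux f hf b hne h1

lemma pos_add (M : TuringMachine A Q) (c : Config A Q) (a b : ℕ) :
    M.pos (b + a) c = M.pos b ((M.step)^[a] c) := by
  rw [pos, pos, Function.iterate_add_apply]

/-- Tracking lemma. -/
lemma track (M : TuringMachine A Q) :
    ∀ (t : ℕ) (x : ℤ → Cell A Q) (c : Config A Q) (R S : ℤ),
      XHmem x →
      (∀ s : ℕ, s ≤ t → |M.pos s c| ≤ S) →
      S + 1 + t ≤ R →
      (∀ i : ℤ, |i| ≤ R → x i = iota c i) →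
      XHmem ((M.hstep)^[t] x) ∧
        ∀ i : ℤ, |i| ≤ R - t → ((M.hstep)^[t] x) i = iota ((M.step)^[t] c) i := by
  intro t
  induction t with
  | zero =>
    intro x c R S hx _ _ hag
    refine ⟨hx, fun i hi => ?_⟩
    exact hag i (by push_cast at hi ⊢; omega)
  | succ n ih =>
    intro x c R S hx hposb hR hag
    set p := c.2.2 with hpdef
    have hpS : |p| ≤ S := by simpa [pos_zero] using hposb 0 (Nat.zero_le _)
    have hpR : |p| ≤ R := by push_cast at hR; omega
    have hxp : x p = Sum.inr (c.1 p, c.2.1) := by rw [hag p hpR, iota_head]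
    set r := M.δ (c.1 p) c.2.1 with hr
    set j := p + dir r.2.2 with hj
    have hji : j ≠ p := by have := dir_ne r.2.2; omega
    have hjR : |j| ≤ R := by
      have := dir_abs r.2.2
      push_cast at hR; rw [hj]
      have : |p + dir r.2.2| ≤ |p| + |dir r.2.2| := abs_add_le _ _
      omega
    have hguts : M.hstep x = Function.update (Function.update x p (Sum.inl r.1)) j
        (Sum.inr (base (x j), r.2.1)) := hstep_eq M x p (c.1 p) c.2.1 hx hxp
    have hX' : XHmem (M.hstep x) := by
      rw [hguts]
      intro i1 hi1 i2 hi2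
      simp only [Set.mem_setOf_eq] at hi1 hi2
      have key : ∀ i : ℤ, isHead (Function.update (Function.update x p (Sum.inl r.1)) j
          (Sum.inr (base (x j), r.2.1)) i) → i = j := by
        intro i hi
        by_contra hij
        rw [Function.update_of_ne hij] at hi
        rcases em (i = p) with h | h
        · rw [h, Function.update_self] at hi
          exact not_isHead_inl _ hi
        · rw [Function.update_of_ne h] at hi
          have : i = p := hx hi (by rw [Set.mem_setOf_eq, hxp]; exact ⟨_, rfl⟩)
          exact h this
      rw [key i1 hi1, key i2 hi2]
    have hag' : ∀ i : ℤ, |i| ≤ R → (M.hstep x) i = iota (M.step c) i := by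
      intro i hiR
      rw [hguts, ← hstep_iota M c]
      have hgutsc : M.hstep (iota c) = Function.update (Function.update (iota c) p (Sum.inl r.1)) j
          (Sum.inr (base (iota c j), r.2.1)) := hstep_eq M (iota c) p (c.1 p) c.2.1 (XHmem_iota c) (iota_head c)
      rw [hgutsc]
      rcases em (i = j) with h | h
      · subst h
        rw [Function.update_self, Function.update_self, hag j hjR]
      · rw [Function.update_of_ne h, Function.update_of_ne h]
        rcases em (i = p) with h2 | h2
        · subst h2; rw [Function.update_self, Function.update_self]
        · rw [Function.update_of_ne h2, Function.update_of_ne h2, hag i hiR]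
    have hposb' : ∀ s : ℕ, s ≤ n → |M.pos s (M.step c)| ≤ S := by
      intro s hs
      have : M.pos s (M.step c) = M.pos (s + 1) c := by
        rw [pos, pos, Function.iterate_succ_apply]
      rw [this]
      exact hposb (s + 1) (by omega)
    have hR' : S + 1 + n ≤ R - 1 := by push_cast at hR ⊢; omega
    have := ih (M.hstep x) (M.step c) (R - 1) S hX' hposb' hR'
      (fun i hi => hag' i (by omega))
    refine ⟨?_, ?_⟩
    · rw [Function.iterate_succ_apply]; exact this.1
    · intro i hi
      rw [Function.iterate_succ_apply, Function.iterate_succ_apply]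
      exact this.2 i (by push_cast at hi ⊢; omega)

end TuringMachine

/-- If the machine can make arbitrarily wide right-cycles at cell 0 (for each j
there is a configuration on which the head starts at 0, reaches some cell n > j
and later returns to 0), then the moving-head system T_H has a configuration
containing the head which is not an equicontinuity point. -/
theorem unbounded_right_cycles_gives_non_equicontinuous_head_config
    {A Q : Type*} [Fintype A] [Fintype Q]
    (M : TuringMachine A Q)
    (hcyc : ∀ j : ℕ, ∃ (x : TuringMachine.Config A Q) (n t₁ t₂ : ℕ),
      j < n ∧ 0 < t₁ ∧ t₁ < t₂ ∧ x.2.2 = 0 ∧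
      M.pos t₁ x = n ∧ M.pos t₂ x = 0) :
    ∃ x : ℤ → TuringMachine.Cell A Q, TuringMachine.XHmem x ∧
      (∃ i : ℤ, TuringMachine.isHead (x i)) ∧
      ∃ k : ℕ, ∀ m : ℕ, ∃ y : ℤ → TuringMachine.Cell A Q,
        TuringMachine.XHmem y ∧ (∀ i : ℤ, |i| ≤ (m : ℤ) → y i = x i) ∧
        ∃ t : ℕ, ∃ j : ℤ, |j| ≤ (k : ℤ) ∧
          ((M.hstep)^[t] y) j ≠ ((M.hstep)^[t] x) j := by
  open TuringMachine in
  classical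
  choose c n t₁ t₂ hn ht₁ ht₁₂ hc0 hpos1 hpos2 using hcyc
  set s : ℕ → ℕ := fun j => Nat.findGreatest (fun s => M.pos s (c j) = 0) (t₁ j) with hsdef
  have hs_le : ∀ j, s j ≤ t₁ j := fun j => Nat.findGreatest_le _
  have hs_zero : ∀ j, M.pos (s j) (c j) = 0 := by
    intro j
    have h := Nat.findGreatest_spec (P := fun s => M.pos s (c j) = 0) (m := 0) (n := t₁ j)
      (Nat.zero_le _) (show M.pos 0 (c j) = 0 by rw [pos_zero]; exact hc0 j)
    exact h
  have hs_max : ∀ j w, s j < w → w ≤ t₁ j → M.pos w (c j) ≠ 0 :=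
    fun j w h1 h2 => Nat.findGreatest_is_greatest h1 h2
  set d : ℕ → Config A Q := fun j => (M.step)^[s j] (c j) with hddef
  have hd0 : ∀ j, (d j).2.2 = 0 := fun j => hs_zero j
  have posd : ∀ (j b : ℕ), M.pos b (d j) = M.pos (b + s j) (c j) :=
    fun j b => (pos_add M (c j) (s j) b).symm
  set u : ℕ → ℕ := fun j => t₁ j - s j with hudef
  set v : ℕ → ℕ := fun j => t₂ j - s j with hvdef
  have hu_add : ∀ j, u j + s j = t₁ j := by
    intro j; have := hs_le j; show t₁ j - s j + s j = t₁ j; omega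
  have hv_add : ∀ j, v j + s j = t₂ j := by
    intro j; have := hs_le j; have := ht₁₂ j; show t₂ j - s j + s j = t₂ j; omega
  have hdu : ∀ j, M.pos (u j) (d j) = n j := by
    intro j; rw [posd j (u j), hu_add j]; exact hpos1 j
  have hdv : ∀ j, M.pos (v j) (d j) = 0 := by
    intro j; rw [posd j (v j), hv_add j]; exact hpos2 j
  have hv1 : ∀ j, 1 ≤ v j := by
    intro j; have := hs_le j; have := ht₁₂ j; show 1 ≤ t₂ j - s j; omega
  have hnu : ∀ j, n j ≤ u j := by
    intro j
    have h1 := pos_abs_le M (d j) (hd0 j) (u j)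
    rw [hdu j] at h1
    rw [abs_of_nonneg (by positivity)] at h1
    exact_mod_cast h1
  have hju : ∀ j, j < u j := fun j => lt_of_lt_of_le (hn j) (hnu j)
  have hdpos : ∀ j t, 1 ≤ t → t ≤ u j → 0 < M.pos t (d j) := by
    intro j
    apply chain_pos (fun t => M.pos t (d j)) (fun t => pos_succ_abs M (d j) t) (u j)
    · rw [pos_zero]; exact hd0 j
    · intro t h1 h2
      rw [posd j t]
      refine hs_max j (t + s j) (by omega) ?_
      have := hu_add j; omega
    · rw [hdu j]
      have : 0 < n j := by have := hn j; omega
      exact_mod_cast this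
  -- ultrafilter limit
  set U : Ultrafilter ℕ := Filter.hyperfilter ℕ with hUdef
  have hUcof : ∀ (T : Set ℕ), Tᶜ.Finite → T ∈ U := by
    intro T h
    exact Filter.mem_hyperfilter_of_finite_compl h
  have hlim : ∀ i : ℤ, ∃ w : Cell A Q, {j | iota (d j) i = w} ∈ U := by
    intro i
    by_contra hcon
    push_neg at hcon
    have h1 : ∀ w : Cell A Q, {j | iota (d j) i = w}ᶜ ∈ U :=
      fun w => Ultrafilter.compl_mem_iff_notMem.mpr (hcon w)
    have h2 : (⋂ w : Cell A Q, {j | iota (d j) i = w}ᶜ) ∈ U := Filter.iInter_mem.mpr h1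
    obtain ⟨j, hj⟩ := Filter.nonempty_of_mem h2
    simp only [Set.mem_iInter, Set.mem_compl_iff, Set.mem_setOf_eq] at hj
    exact hj _ rfl
  choose x hx using hlim
  have hwin : ∀ (W : Finset ℤ), {j | ∀ i ∈ W, iota (d j) i = x i} ∈ U := by
    intro W
    have heq : {j | ∀ i ∈ W, iota (d j) i = x i} = ⋂ i ∈ (W : Set ℤ), {j | iota (d j) i = x i} := by
      ext; simp
    rw [heq]
    exact (Filter.biInter_mem W.finite_toSet).mpr fun i _ => hx i
  have hhead0 : isHead (x 0) := by
    obtain ⟨j, hj⟩ := Filter.nonempty_of_mem (hx 0)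
    have : iota (d j) 0 = Sum.inr ((d j).1 0, (d j).2.1) := by
      simp [iota, (hd0 j).symm]
    exact ⟨_, by rw [← hj, this]⟩
  have honly0 : ∀ i : ℤ, isHead (x i) → i = 0 := by
    intro i hi
    by_contra h
    obtain ⟨j, hj⟩ := Filter.nonempty_of_mem (hx i)
    rw [← hj] at hi
    have : iota (d j) i = Sum.inl ((d j).1 i) := by
      rw [iota, if_neg (by rw [hd0 j]; exact h)]
    rw [this] at hi
    exact not_isHead_inl _ hi
  have hXx : XHmem x := by
    intro i1 h1 i2 h2
    rw [honly0 i1 h1, honly0 i2 h2]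
  have claimA : ∀ t : ℕ, 1 ≤ t → ∀ pr : A × Q, ((M.hstep)^[t] x) 0 ≠ Sum.inr pr := by
    intro t ht
    have hset : ({j | ∀ i ∈ Finset.Icc (-(2 * (t : ℤ) + 1)) (2 * (t : ℤ) + 1), iota (d j) i = x i}
        ∩ {j | t ≤ j} : Set ℕ) ∈ U := by
      refine Filter.inter_mem (hwin _) (hUcof _ ?_)
      have : {j : ℕ | t ≤ j}ᶜ = Set.Iio t := by ext; simp [Set.Iio, not_le]
      rw [this]
      exact Set.finite_Iio t
    obtain ⟨j, hjag, hjt⟩ := Filter.nonempty_of_mem hset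
    have htrack := track M t x (d j) (2 * (t : ℤ) + 1) (t : ℤ) hXx
      (fun s' hs' => le_trans (pos_abs_le M (d j) (hd0 j) s') (by exact_mod_cast hs'))
      (by omega)
      (fun i hi => (hjag i (by rw [Finset.mem_Icc]; constructor <;> [exact neg_le_of_abs_le hi; exact le_of_abs_le hi])).symm)
    have h0 := htrack.2 0 (by simp only [abs_zero]; omega)
    have hpt : ((M.step)^[t] (d j)).2.2 ≠ 0 := by
      have := hdpos j t ht (le_of_lt (lt_of_le_of_lt hjt (hju j)))
      rw [pos] at this; omega
    intro pr hcon
    rw [h0, iota, if_neg (fun hh => hpt hh.symm)] at hcon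
    exact absurd hcon (by simp)
  refine ⟨x, hXx, ⟨0, hhead0⟩, 0, ?_⟩
  intro m
  obtain ⟨j, hjag⟩ := Filter.nonempty_of_mem (hwin (Finset.Icc (-(m : ℤ)) m))
  refine ⟨iota (d j), XHmem_iota _, ?_, v j, 0, by simp, ?_⟩
  · intro i hi
    exact hjag i (Finset.mem_Icc.mpr (abs_le.mp hi))
  · rw [hstep_iter_iota]
    intro hcon
    have h22 : ((M.step)^[v j] (d j)).2.2 = 0 := hdv j
    have hiota : iota ((M.step)^[v j] (d j)) 0
        = Sum.inr (((M.step)^[v j] (d j)).1 0, ((M.step)^[v j] (d j)).2.1) := by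
      rw [iota, if_pos h22.symm]
    exact claimA (v j) (hv1 j) _ (by rw [← hcon, hiota])
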